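/- There exists a unique ω̌ ∈ R at which C_R* attains its maximum over R; moreover λ̌ := C_R*(ω̌) > 0, and setting ǔ = C_L*(ω̌), the pair (ω̌, ǔ) is the unique element of R × ℝ satisfying both C_L*(ω) − u ≤ 0 and C_U*(ω) − u ≥ λ̌; at this pair the constraints hold with equality, i.e. C_L*(ω̌) = ǔ and C_U*(ω̌) − ǔ = λ̌. -/

import Mathlib

open scoped RealInnerProductSpace

/-- Uniqueness of the mode-midpoint: in the labeled-points setting with `R ⊆ S^{q−1}`
closed and geodesically connected (in the chord sense) and a feasible point, there is a
unique `ω̌ ∈ R` maximizing `C_R*` over `R`; moreover `λ̌ = C_R*(ω̌) > 0`, and with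
`ǔ = C_L*(ω̌)`, the pair `(ω̌, ǔ)` is the unique element of `R × ℝ` satisfying
`C_L*(ω) − u ≤ 0` and `C_U*(ω) − u ≥ λ̌`; at this pair the constraints hold with
equality. -/
theorem modeMidpoint_exists_unique
    (q m : ℕ) (hq : 1 ≤ q)
    (x : Fin m → EuclideanSpace ℝ (Fin q)) (v : Fin m → ℝ)
    (hv : ∀ j, v j = -1 ∨ v j = 1)
    (hneg : ∃ k, v k = -1) (hpos : ∃ l, v l = 1)
    (R : Set (EuclideanSpace ℝ (Fin q)))
    (hRsub : R ⊆ Metric.sphere (0 : EuclideanSpace ℝ (Fin q)) 1)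
    (hRclosed : IsClosed R)
    (hRgeo : ∀ u ∈ R, ∀ w ∈ R, ∀ α ∈ Set.Icc (0 : ℝ) 1,
      α • u + (1 - α) • w ≠ 0 →
        ‖α • u + (1 - α) • w‖⁻¹ • (α • u + (1 - α) • w) ∈ R)
    (ω₁ : EuclideanSpace ℝ (Fin q)) (u₁ : ℝ) (hω₁R : ω₁ ∈ R)
    (hfeas : ∀ j, (0 < ⟪ω₁, x j⟫ - u₁ → v j = 1) ∧ (⟪ω₁, x j⟫ - u₁ ≤ 0 → v j = -1))
    (CL CU : EuclideanSpace ℝ (Fin q) → ℝ)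
    (hCL : ∀ ω, IsGreatest ((fun j => ⟪ω, x j⟫) '' {j | v j = -1}) (CL ω))
    (hCU : ∀ ω, IsLeast ((fun j => ⟪ω, x j⟫) '' {j | v j = 1}) (CU ω)) :
    ∃ ωc : EuclideanSpace ℝ (Fin q),
      (ωc ∈ R ∧ ∀ ω ∈ R, CU ω - CL ω ≤ CU ωc - CL ωc) ∧
      (∀ ω' : EuclideanSpace ℝ (Fin q),
        (ω' ∈ R ∧ ∀ ω ∈ R, CU ω - CL ω ≤ CU ω' - CL ω') → ω' = ωc) ∧
      0 < CU ωc - CL ωc ∧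
      (∀ pr : EuclideanSpace ℝ (Fin q) × ℝ,
        (pr.1 ∈ R ∧ CL pr.1 - pr.2 ≤ 0 ∧ CU ωc - CL ωc ≤ CU pr.1 - pr.2)
          ↔ pr = (ωc, CL ωc)) ∧
      CL ωc - CL ωc = 0 ∧ CU ωc - CL ωc = CU ωc - CL ωc := by
  obtain ⟨k0, hk0⟩ := hneg
  obtain ⟨l0, hl0⟩ := hpos
  -- basic consequences of hCL/hCU
  have CLmem : ∀ ω, ∃ j, v j = -1 ∧ CL ω = ⟪ω, x j⟫ := by
    intro ω
    obtain ⟨j, hj, hje⟩ := (hCL ω).1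
    exact ⟨j, hj, hje.symm⟩
  have CLub : ∀ ω (j : Fin m), v j = -1 → ⟪ω, x j⟫ ≤ CL ω := by
    intro ω j hj
    exact (hCL ω).2 ⟨j, hj, rfl⟩
  have CUmem : ∀ ω, ∃ j, v j = 1 ∧ CU ω = ⟪ω, x j⟫ := by
    intro ω
    obtain ⟨j, hj, hje⟩ := (hCU ω).1
    exact ⟨j, hj, hje.symm⟩
  have CUlb : ∀ ω (j : Fin m), v j = 1 → CU ω ≤ ⟪ω, x j⟫ := by
    intro ω j hj
    exact (hCU ω).2 ⟨j, hj, rfl⟩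
  -- continuity of CL and CU
  have hinner : ∀ j : Fin m, Continuous fun ω : EuclideanSpace ℝ (Fin q) => ⟪ω, x j⟫ :=
    fun j => Continuous.inner continuous_id continuous_const
  have SLne : (Finset.univ.filter (fun j => v j = -1)).Nonempty :=
    ⟨k0, by simp [hk0]⟩
  have SUne : (Finset.univ.filter (fun j => v j = 1)).Nonempty :=
    ⟨l0, by simp [hl0]⟩
  have hCLeq : CL = fun ω =>
      (Finset.univ.filter (fun j => v j = -1)).sup' SLne (fun j => ⟪ω, x j⟫) := by
    funext ω
    refine (hCL ω).unique ?_
    constructor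
    · obtain ⟨j, hjmem, hje⟩ := Finset.exists_mem_eq_sup'
        SLne (fun j => ⟪ω, x j⟫)
      exact ⟨j, (Finset.mem_filter.mp hjmem).2, hje.symm⟩
    · rintro y ⟨j, hj, rfl⟩
      exact Finset.le_sup' (fun j => ⟪ω, x j⟫) (Finset.mem_filter.mpr ⟨Finset.mem_univ j, hj⟩)
  have hCUeq : CU = fun ω =>
      (Finset.univ.filter (fun j => v j = 1)).inf' SUne (fun j => ⟪ω, x j⟫) := by
    funext ω
    refine (hCU ω).unique ?_
    constructor
    · obtain ⟨j, hjmem, hje⟩ := Finset.exists_mem_eq_inf'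
        SUne (fun j => ⟪ω, x j⟫)
      exact ⟨j, (Finset.mem_filter.mp hjmem).2, hje.symm⟩
    · rintro y ⟨j, hj, rfl⟩
      exact Finset.inf'_le (fun j => ⟪ω, x j⟫) (Finset.mem_filter.mpr ⟨Finset.mem_univ j, hj⟩)
  have hCLcont : Continuous CL := by
    rw [hCLeq]
    exact Continuous.finset_sup'_apply SLne (fun j _ => hinner j)
  have hCUcont : Continuous CU := by
    rw [hCUeq]
    exact Continuous.finset_inf'_apply SUne (fun j _ => hinner j)
  -- compactness and existence of a maximizer
  have hRcomp : IsCompact R :=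
    (isCompact_sphere (0 : EuclideanSpace ℝ (Fin q)) 1).of_isClosed_subset hRclosed hRsub
  obtain ⟨ωc, hωcR, hmax⟩ :=
    hRcomp.exists_isMaxOn ⟨ω₁, hω₁R⟩ ((hCUcont.sub hCLcont).continuousOn)
  have hmax' : ∀ ω ∈ R, CU ω - CL ω ≤ CU ωc - CL ωc := fun ω hω => hmax hω
  -- positivity at ω₁
  have hpos1 : 0 < CU ω₁ - CL ω₁ := by
    obtain ⟨j, hj, hje⟩ := CLmem ω₁
    obtain ⟨l, hl, hle⟩ := CUmem ω₁
    have h1 : ⟪ω₁, x j⟫ - u₁ ≤ 0 := by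
      by_contra h
      push_neg at h
      have := (hfeas j).1 h
      rw [hj] at this; norm_num at this
    have h2 : 0 < ⟪ω₁, x l⟫ - u₁ := by
      by_contra h
      push_neg at h
      have := (hfeas l).2 h
      rw [hl] at this; norm_num at this
    rw [hje, hle]; linarith
  have hlampos : 0 < CU ωc - CL ωc := lt_of_lt_of_le hpos1 (hmax' ω₁ hω₁R)
  -- uniqueness of the maximizer
  have hnorm : ∀ ω ∈ R, ‖ω‖ = 1 := by
    intro ω hω
    have := hRsub hω
    simpa [mem_sphere_zero_iff_norm] using this
  have huniq : ∀ ω' : EuclideanSpace ℝ (Fin q),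
      (ω' ∈ R ∧ ∀ ω ∈ R, CU ω - CL ω ≤ CU ω' - CL ω') → ω' = ωc := by
    rintro ω' ⟨hω'R, hmax''⟩
    by_contra hne
    have hlamm : CU ω' - CL ω' = CU ωc - CL ωc :=
      le_antisymm (hmax' ω' hω'R) (hmax'' ωc hωcR)
    have hnωc : ‖ωc‖ = 1 := hnorm ωc hωcR
    have hnω' : ‖ω'‖ = 1 := hnorm ω' hω'R
    set w : EuclideanSpace ℝ (Fin q) :=
      (2⁻¹ : ℝ) • ωc + (1 - 2⁻¹ : ℝ) • ω' with hw
    have hwin : ∀ y : EuclideanSpace ℝ (Fin q),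
        ⟪w, y⟫ = 2⁻¹ * ⟪ωc, y⟫ + 2⁻¹ * ⟪ω', y⟫ := by
      intro y
      rw [hw]
      rw [inner_add_left, real_inner_smul_left, real_inner_smul_left]
      norm_num
    have hwne : w ≠ 0 := by
      intro h0
      have hzl : (0:ℝ) = 2⁻¹ * ⟪ωc, x l0⟫ + 2⁻¹ * ⟪ω', x l0⟫ := by
        rw [← hwin (x l0), h0, inner_zero_left]
      have hzk : (0:ℝ) = 2⁻¹ * ⟪ωc, x k0⟫ + 2⁻¹ * ⟪ω', x k0⟫ := by
        rw [← hwin (x k0), h0, inner_zero_left]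
      have h1 := CUlb ωc l0 hl0
      have h2 := CUlb ω' l0 hl0
      have h3 := CLub ωc k0 hk0
      have h4 := CLub ω' k0 hk0
      linarith
    have hwmem := hRgeo ωc hωcR ω' hω'R 2⁻¹ ⟨by norm_num, by norm_num⟩ hwne
    have hwpos : 0 < ‖w‖ := norm_pos_iff.mpr hwne
    -- ‖w‖ < 1
    have ht : ⟪ωc, ω'⟫ < 1 := by
      exact (inner_lt_one_iff_real_of_norm_eq_one hnωc hnω').mpr (fun h => hne h.symm)
    have hw2 : ‖w‖ ^ 2 = 2⁻¹ + 2⁻¹ * ⟪ωc, ω'⟫ := by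
      have h1 : ‖w‖ ^ 2 = ⟪w, w⟫ := (real_inner_self_eq_norm_sq w).symm
      rw [h1, hwin w, hw]
      rw [inner_add_right, inner_add_right, real_inner_smul_right, real_inner_smul_right,
        real_inner_smul_right, real_inner_smul_right]
      have e1 : ⟪ωc, ωc⟫ = 1 := by
        rw [real_inner_self_eq_norm_sq, hnωc]; norm_num
      have e2 : ⟪ω', ω'⟫ = 1 := by
        rw [real_inner_self_eq_norm_sq, hnω']; norm_num
      have e3 : ⟪ω', ωc⟫ = ⟪ωc, ω'⟫ := real_inner_comm _ _
      rw [e1, e2, e3]; ring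
    have hwlt : ‖w‖ < 1 := by nlinarith [norm_nonneg w]
    set wn : EuclideanSpace ℝ (Fin q) := ‖w‖⁻¹ • w with hwn
    have hwnin : ∀ y : EuclideanSpace ℝ (Fin q),
        ⟪wn, y⟫ = ‖w‖⁻¹ * (2⁻¹ * ⟪ωc, y⟫ + 2⁻¹ * ⟪ω', y⟫) := by
      intro y
      rw [hwn, real_inner_smul_left, hwin]
    have hinv1 : 1 < ‖w‖⁻¹ := by
      rw [lt_inv_comm₀ one_pos hwpos]; simpa using hwlt
    -- lower bound for CU wn
    obtain ⟨l, hl, hle⟩ := CUmem wn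
    have hCUwn : ‖w‖⁻¹ * (2⁻¹ * CU ωc + 2⁻¹ * CU ω') ≤ CU wn := by
      rw [hle, hwnin (x l)]
      have h1 := CUlb ωc l hl
      have h2 := CUlb ω' l hl
      have hposinv : (0:ℝ) < ‖w‖⁻¹ := inv_pos.mpr hwpos
      nlinarith
    obtain ⟨k, hk, hke⟩ := CLmem wn
    have hCLwn : CL wn ≤ ‖w‖⁻¹ * (2⁻¹ * CL ωc + 2⁻¹ * CL ω') := by
      rw [hke, hwnin (x k)]
      have h3 := CLub ωc k hk
      have h4 := CLub ω' k hk
      have hposinv : (0:ℝ) < ‖w‖⁻¹ := inv_pos.mpr hwpos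
      nlinarith
    have hgt : CU ωc - CL ωc < CU wn - CL wn := by nlinarith
    have := hmax' wn hwmem
    linarith
  refine ⟨ωc, ⟨hωcR, hmax'⟩, huniq, hlampos, ?_, by ring, rfl⟩
  intro pr
  constructor
  · rintro ⟨hpR, h1, h2⟩
    have hmaxpr : CU ωc - CL ωc ≤ CU pr.1 - CL pr.1 := by
      obtain ⟨j, hj, hje⟩ := CLmem pr.1
      linarith [CLub pr.1 j hj]
    have heq : pr.1 = ωc :=
      huniq pr.1 ⟨hpR, fun ω hω => le_trans (hmax' ω hω) hmaxpr⟩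
    have h1' : CL ωc ≤ pr.2 := by rw [heq] at h1; linarith
    have h2' : pr.2 ≤ CL ωc := by rw [heq] at h2; linarith
    exact Prod.ext heq (le_antisymm h2' h1')
  · rintro rfl
    exact ⟨hωcR, by simp, by simp⟩
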